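/- Local insertion of patterns into bond animals (Proposition 3.1, bond-animal case of Axiom (CA4) on Z^d): Let d ≥ 2 and let P = (P_1, P_2) be a proper pattern for bond animals on Z^d. Then there exists a finite set D of sites and bonds of Z^d with the following property: for every bond animal G on Z^d and every site y of G, there exist a bond animal G' and a vector t ∈ Z^d such that y is a site of D+t, G' contains the pattern P+t, and the sets of sites and bonds of G' lying outside D+t coincide exactly with the sets of sites and bonds of G lying outside D+t. -/

import Mathlib

open Filter

/-- A site of the `d`-dimensional hypercubic lattice. -/
abbrev Site (d : ℕ) := Fin d → ℤ

/-- A (pre)graph in `ℤ^d`: a finite set of sites together with a finite set of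
(unordered) bonds.  No conditions are imposed at this stage; this is also used as a
container for the two parts of a pattern, and for the set `D` of Axiom (CA4). -/
structure PreGraph (d : ℕ) where
  sites : Finset (Site d)
  bonds : Finset (Sym2 (Site d))

/-- `b` is a bond of the hypercubic lattice `ℤ^d`: an unordered pair `{x,y}` with
`‖x - y‖₁ = 1`. -/
def IsLatticeBond {d : ℕ} (b : Sym2 (Site d)) : Prop :=
  ∃ x y : Site d, b = s(x, y) ∧ (∑ i, |x i - y i|) = 1

/-- Adjacency inside the graph `G`. -/
def Adj {d : ℕ} (G : PreGraph d) (x y : Site d) : Prop := s(x, y) ∈ G.bonds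

/-- `G` is a (bond) animal with respect to the set of allowed lattice bonds `Bd`:
a finite nonempty connected subgraph of the lattice whose bond set is `Bd`. -/
def IsAnimalOn {d : ℕ} (Bd : Sym2 (Site d) → Prop) (G : PreGraph d) : Prop :=
  G.sites.Nonempty ∧
  (∀ b ∈ G.bonds, Bd b) ∧
  (∀ b ∈ G.bonds, ∀ x ∈ b, x ∈ G.sites) ∧
  (∀ x ∈ G.sites, ∀ y ∈ G.sites, Relation.ReflTransGen (Adj G) x y)

/-- A bond animal on the hypercubic lattice `ℤ^d`. -/
def IsBondAnimal {d : ℕ} (G : PreGraph d) : Prop := IsAnimalOn IsLatticeBond G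

/-- `G` contains a cycle: there are `n ≥ 3` distinct sites arranged cyclically with
consecutive ones joined by bonds of `G`. -/
def HasCycle {d : ℕ} (G : PreGraph d) : Prop :=
  ∃ (n : ℕ) (f : ZMod n → Site d), 3 ≤ n ∧ Function.Injective f ∧
    ∀ i : ZMod n, s(f i, f (i + 1)) ∈ G.bonds

/-- A bond tree: a bond animal containing no cycles. -/
def IsBondTree {d : ℕ} (G : PreGraph d) : Prop := IsBondAnimal G ∧ ¬ HasCycle G

/-- A site animal: a bond animal containing every lattice bond both of whose
endpoints are sites of the animal. -/
def IsSiteAnimal {d : ℕ} (G : PreGraph d) : Prop :=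
  IsBondAnimal G ∧
  ∀ b : Sym2 (Site d), IsLatticeBond b → (∀ x ∈ b, x ∈ G.sites) → b ∈ G.bonds

/-- The translateCluster `G + u`. -/
def translateCluster {d : ℕ} (G : PreGraph d) (u : Site d) : PreGraph d :=
  ⟨G.sites.image (· + u), G.bonds.image (Sym2.map (· + u))⟩

/-- `G` contains the pattern `(P₁, P₂)`: all sites and bonds of `P₁` belong to `G`,
and no site or bond of `P₂` belongs to `G`. -/
def ContainsPattern {d : ℕ} (G P₁ P₂ : PreGraph d) : Prop :=
  P₁.sites ⊆ G.sites ∧ P₁.bonds ⊆ G.bonds ∧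
  (∀ x ∈ P₂.sites, x ∉ G.sites) ∧ (∀ b ∈ P₂.bonds, b ∉ G.bonds)

/-- `(P₁, P₂)` is a pattern: `P₁` and `P₂` are (finite) disjoint sets of sites and
bonds, with `P₁` nonempty. -/
def IsPattern {d : ℕ} (P₁ P₂ : PreGraph d) : Prop :=
  (P₁.sites.Nonempty ∨ P₁.bonds.Nonempty) ∧
  Disjoint P₁.sites P₂.sites ∧ Disjoint P₁.bonds P₂.bonds

/-- `(P₁, P₂)` is a proper pattern for the class `C` of clusters: for infinitely
many `n`, some cluster in `C` of size `n` contains the pattern. -/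
def ProperFor {d : ℕ} (C : PreGraph d → Prop) (P₁ P₂ : PreGraph d) : Prop :=
  {n : ℕ | ∃ G : PreGraph d, C G ∧ G.sites.card = n ∧ ContainsPattern G P₁ P₂}.Infinite

/-- `|τ_P(G)|`: the number of translates of the pattern `(P₁, P₂)` occurring in `G`. -/
noncomputable def patternCount {d : ℕ} (P₁ P₂ G : PreGraph d) : ℕ :=
  {x : Site d | ContainsPattern G (translateCluster P₁ x) (translateCluster P₂ x)}.ncard

/-- Lexicographic (strict) order on sites. -/
def LexLt {d : ℕ} (x y : Site d) : Prop :=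
  ∃ i : Fin d, (∀ j, j < i → x j = y j) ∧ x i < y i

/-- The lexicographically smallest site of `G` is the origin. -/
def LexMinAtOrigin {d : ℕ} (G : PreGraph d) : Prop :=
  (0 : Site d) ∈ G.sites ∧ ∀ x ∈ G.sites, x = 0 ∨ LexLt 0 x

/-- `C*_n` for the class `C`: clusters in `C` of size `n` (number of sites) whose
lexicographically smallest site is the origin; one representative per translation
class. -/
def Cstar {d : ℕ} (C : PreGraph d → Prop) (n : ℕ) : Set (PreGraph d) :=
  {G | C G ∧ G.sites.card = n ∧ LexMinAtOrigin G}

open scoped ENNReal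

/-- Axiom (CA2) for an `ℝ≥0∞`-valued weight function on the class `C`. -/
def CA2 {d : ℕ} (C : PreGraph d → Prop) (wt : PreGraph d → ℝ≥0∞) : Prop :=
  ∀ m : ℕ, ∃ γ : ℝ≥0∞, γ ≠ 0 ∧ γ ≠ ⊤ ∧
    ∀ G G' : PreGraph d, C G → C G' →
      (symmDiff G.sites G'.sites).card + (symmDiff G.bonds G'.bonds).card ≤ m →
      wt G / γ ≤ wt G' ∧ wt G' ≤ γ * wt G

/-- A weight function on the class `C`: positive and finite on clusters,
translation invariant, and satisfying (CA2). -/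
def IsWeight {d : ℕ} (C : PreGraph d → Prop) (wt : PreGraph d → ℝ≥0∞) : Prop :=
  (∀ G, C G → wt G ≠ 0 ∧ wt G ≠ ⊤) ∧
  (∀ (G : PreGraph d) (u : Site d), wt (translateCluster G u) = wt G) ∧
  CA2 C wt

/-- Weighted sum of a set of clusters (`ℝ≥0∞`-valued weights). -/
noncomputable def Gsum {d : ℕ} (S : Set (PreGraph d)) (wt : PreGraph d → ℝ≥0∞) : ℝ≥0∞ :=
  ∑' G : S, wt G

/-- Weighted sum of a set of clusters (real-valued weights). -/
noncomputable def GsumR {d : ℕ} (S : Set (PreGraph d)) (f : PreGraph d → ℝ) : ℝ :=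
  ∑' G : S, f G

/-- `mono(G)`: the number of lattice bonds not in `G` with both endpoints in `G`. -/
noncomputable def monoCount {d : ℕ} (G : PreGraph d) : ℕ :=
  {b : Sym2 (Site d) | IsLatticeBond b ∧ b ∉ G.bonds ∧ ∀ x ∈ b, x ∈ G.sites}.ncard

/-- `solv(G)`: the number of lattice bonds not in `G` with exactly one endpoint in `G`. -/
noncomputable def solvCount {d : ℕ} (G : PreGraph d) : ℕ :=
  {b : Sym2 (Site d) | IsLatticeBond b ∧ b ∉ G.bonds ∧
    ∃ x y : Site d, b = s(x, y) ∧ x ∈ G.sites ∧ y ∉ G.sites}.ncard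

namespace CA4Aux


lemma sum_abs_update {d : ℕ} (x : Site d) (i : Fin d) (σ : ℤ) :
    (∑ j, |x j - Function.update x i (x i + σ) j|) = |σ| := by
  rw [Finset.sum_eq_single i]
  · simp
  · intro j _ hj
    rw [Function.update_of_ne hj]
    simp
  · simp

lemma isLatticeBond_update {d : ℕ} (x : Site d) (i : Fin d) (σ : ℤ) (hσ : |σ| = 1) :
    IsLatticeBond s(x, Function.update x i (x i + σ)) :=
  ⟨x, _, rfl, by rw [sum_abs_update]; exact hσ⟩

lemma isLatticeBond_translate {d : ℕ} (u : Site d) {b : Sym2 (Site d)} (hb : IsLatticeBond b) :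
    IsLatticeBond (Sym2.map (· + u) b) := by
  obtain ⟨x, y, rfl, hs⟩ := hb
  refine ⟨x + u, y + u, by rw [Sym2.map_pair_eq], ?_⟩
  have : ∀ i, (x + u) i - (y + u) i = x i - y i := by intro i; simp
  calc (∑ i, |(x + u) i - (y + u) i|) = ∑ i, |x i - y i| := by
        exact Finset.sum_congr rfl fun i _ => by rw [this]
    _ = 1 := hs

def M {d : ℕ} (x : Site d) : ℕ := Finset.univ.sup fun i => (x i).natAbs

lemma abs_le_M {d : ℕ} (x : Site d) (i : Fin d) : |x i| ≤ (M x : ℤ) := by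
  have h : (x i).natAbs ≤ M x := Finset.le_sup (f := fun i => (x i).natAbs) (Finset.mem_univ i)
  rw [Int.abs_eq_natAbs]
  exact_mod_cast h

def fM {d : ℕ} : Sym2 (Site d) → ℕ :=
  Sym2.lift ⟨fun a b => max (M a) (M b), fun a b => max_comm _ _⟩

lemma M_le_fM {d : ℕ} (b : Sym2 (Site d)) {x : Site d} (hx : x ∈ b) : M x ≤ fM b := by
  induction b with
  | _ a c =>
    rcases Sym2.mem_iff.mp hx with rfl | rfl
    · rw [fM, Sym2.lift_mk]; exact le_max_left _ _
    · rw [fM, Sym2.lift_mk]; exact le_max_right _ _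




lemma lattice_sum {d : ℕ} {b : Sym2 (Site d)} (h : ∃ x y : Site d, b = s(x, y) ∧ (∑ i, |x i - y i|) = 1)
    {u v : Site d} (huv : b = s(u, v)) : (∑ i, |u i - v i|) = 1 := by
  obtain ⟨x, y, rfl, hs⟩ := h
  rcases Sym2.eq_iff.mp huv with ⟨rfl, rfl⟩ | ⟨rfl, rfl⟩
  · exact hs
  · rw [← hs]
    exact Finset.sum_congr rfl fun i _ => abs_sub_comm _ _

lemma abs_sub_le_one {d : ℕ} {u v : Site d} (h : (∑ i, |u i - v i|) = 1) (i : Fin d) :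
    |u i - v i| ≤ 1 := by
  rw [← h]
  exact Finset.single_le_sum (f := fun j => |u j - v j|) (fun j _ => abs_nonneg _)
    (Finset.mem_univ i)

lemma exists_gt_of_infinite {s : Set ℕ} (hs : s.Infinite) (m : ℕ) : ∃ n ∈ s, m < n := by
  by_contra h
  push_neg at h
  exact hs (Set.Finite.subset (Set.finite_Iic m) h)

lemma shell_reach {d : ℕ} (hd : 2 ≤ d) (R : ℤ) (hR : 1 ≤ R)
    (rel : Site d → Site d → Prop)
    (hrel : ∀ u v : Site d, (∑ i, |u i - v i|) = 1 →
      (∀ i, |u i| ≤ R) → (∀ i, |v i| ≤ R) →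
      (∃ i, R ≤ |u i|) → (∃ i, R ≤ |v i|) → rel u v) :
    ∀ z : Site d, (∀ i, |z i| ≤ R) → (∃ i, R ≤ |z i|) →
      Relation.ReflTransGen rel z (fun _ => R) := by
  suffices H : ∀ n : ℕ, ∀ z : Site d, (∑ i, (R - z i)).toNat ≤ n →
      (∀ i, |z i| ≤ R) → (∃ i, R ≤ |z i|) →
      Relation.ReflTransGen rel z (fun _ => R) by
    exact fun z h1 h2 => H _ z le_rfl h1 h2
  intro n
  induction n with
  | zero =>
    intro z hn hball _
    have hsum : (∑ i, (R - z i)) ≤ 0 := by exact_mod_cast Int.toNat_le.mp hn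
    have hnn : ∀ i ∈ Finset.univ, (0 : ℤ) ≤ R - z i := by
      intro i _
      have := (abs_le.mp (hball i)).2
      omega
    have h0 : (∑ i, (R - z i)) = 0 :=
      le_antisymm hsum (Finset.sum_nonneg hnn)
    have : ∀ i ∈ Finset.univ, R - z i = 0 := (Finset.sum_eq_zero_iff_of_nonneg hnn).mp h0
    have hz : z = fun _ => R := by
      funext i
      have := this i (Finset.mem_univ i)
      omega
    rw [hz]
  | succ n IH =>
    intro z hn hball hshell
    by_cases hall : ∀ i, z i = R
    · have hz : z = fun _ => R := funext hall
      rw [hz]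
    · push_neg at hall
      -- pick shell witness i₁ and a coordinate j ≠ i₁ with z j < R
      have key : ∃ i₁ j : Fin d, j ≠ i₁ ∧ |z i₁| = R ∧ z j < R := by
        by_cases hA : ∃ i, z i = R
        · obtain ⟨i₁, hi₁⟩ := hA
          obtain ⟨j, hj⟩ := hall
          have hjlt : z j < R := lt_of_le_of_ne (abs_le.mp (hball j)).2 hj
          refine ⟨i₁, j, ?_, by rw [hi₁]; exact abs_of_nonneg (by omega), hjlt⟩
          intro h; rw [h] at hj; exact hj hi₁
        · push_neg at hA
          obtain ⟨i₁, hi₁⟩ := hshell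
          have hi₁' : |z i₁| = R := le_antisymm (hball i₁) hi₁
          have : Nontrivial (Fin d) := Fin.nontrivial_iff_two_le.mpr hd
          obtain ⟨j, hj⟩ := exists_ne i₁
          exact ⟨i₁, j, hj, hi₁', lt_of_le_of_ne (abs_le.mp (hball j)).2 (hA j)⟩
      obtain ⟨i₁, j, hji, hi₁, hjlt⟩ := key
      set z' := Function.update z j (z j + 1) with hz'
      have hjge : -R ≤ z j := (abs_le.mp (hball j)).1
      have hball' : ∀ i, |z' i| ≤ R := by
        intro i
        by_cases h : i = j
        · subst h; rw [hz', Function.update_self]; rw [abs_le]; omega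
        · rw [hz', Function.update_of_ne h]; exact hball i
      have hshell' : ∃ i, R ≤ |z' i| := by
        refine ⟨i₁, ?_⟩
        rw [hz', Function.update_of_ne hji.symm, hi₁]
      have hsum : (∑ i, |z i - z' i|) = 1 := by
        rw [hz']
        have := sum_abs_update z j 1
        simpa using this
      have hstep : rel z z' := hrel z z' hsum hball hball' hshell hshell'
      have hmeas : (∑ i, (R - z' i)).toNat ≤ n := by
        have hupd : (fun i => R - z' i) = Function.update (fun i => R - z i) j (R - z j - 1) := by
          funext i
          by_cases h : i = j
          · subst h; rw [hz', Function.update_self, Function.update_self]; ring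
          · rw [hz', Function.update_of_ne h, Function.update_of_ne h]
        have hsum' : (∑ i, (R - z' i)) = (∑ i, (R - z i)) - 1 := by
          have h1 : (∑ i, (R - z' i)) = ∑ i, Function.update (fun i => R - z i) j (R - z j - 1) i := by
            rw [hupd]
          rw [h1, Finset.sum_update_of_mem (Finset.mem_univ j),
            Finset.sum_eq_sum_sdiff_singleton_add (Finset.mem_univ j) (fun i => R - z i)]
          ring
        have hold : (∑ i, (R - z i)) ≤ (n : ℤ) + 1 := by
          have := Int.toNat_le.mp hn
          push_cast at this ⊢
          omega
        rw [Int.toNat_le, hsum']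
        omega
      exact Relation.ReflTransGen.head hstep (IH z' hmeas hball' hshell')

end CA4Aux

/-- **Local insertion of patterns into bond animals** (Proposition 3.1, Axiom (CA4)
for bond animals on `ℤ^d`). -/
theorem ca4_bond_animals
    (d : ℕ) (hd : 2 ≤ d)
    (P₁ P₂ : PreGraph d) (hP : IsPattern P₁ P₂)
    (hproper : ProperFor IsBondAnimal P₁ P₂) :
    ∃ D : PreGraph d,
      ∀ G : PreGraph d, IsBondAnimal G → ∀ y ∈ G.sites,
        ∃ (G' : PreGraph d) (t : Site d),
          IsBondAnimal G' ∧
          y ∈ (translateCluster D t).sites ∧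
          ContainsPattern G' (translateCluster P₁ t) (translateCluster P₂ t) ∧
          G'.sites \ (translateCluster D t).sites
            = G.sites \ (translateCluster D t).sites ∧
          G'.bonds \ (translateCluster D t).bonds
            = G.bonds \ (translateCluster D t).bonds := by
  classical
  -- `r`: bound on the pattern
  set r : ℕ := max ((P₁.sites ∪ P₂.sites).sup CA4Aux.M) ((P₁.bonds ∪ P₂.bonds).sup CA4Aux.fM)
    with hrdef
  have hrsite : ∀ x ∈ P₁.sites ∪ P₂.sites, ∀ i, |x i| ≤ (r : ℤ) := by
    intro x hx i
    refine le_trans (CA4Aux.abs_le_M x i) ?_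
    exact_mod_cast le_trans (Finset.le_sup hx) (le_max_left _ _)
  have hrbond : ∀ b ∈ P₁.bonds ∪ P₂.bonds, ∀ x ∈ b, ∀ i, |x i| ≤ (r : ℤ) := by
    intro b hb x hx i
    refine le_trans (CA4Aux.abs_le_M x i) ?_
    exact_mod_cast le_trans (le_trans (CA4Aux.M_le_fM b hx) (Finset.le_sup hb)) (le_max_right _ _)
  -- choose a big animal `H` containing the pattern
  obtain ⟨n, hn, hngt⟩ := CA4Aux.exists_gt_of_infinite hproper
    ((Fintype.piFinset fun _ : Fin d => Finset.Icc (-(r : ℤ) - 1) ((r : ℤ) + 1)).card)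
  obtain ⟨H, hHanim, hHcard, hHP⟩ := hn
  -- a far site of `H`
  have hfar' : ∃ h₁ ∈ H.sites, ∃ i₀ : Fin d, (r : ℤ) + 2 ≤ |h₁ i₀| := by
    by_contra hcon
    push_neg at hcon
    have hsub : H.sites ⊆ Fintype.piFinset fun _ : Fin d => Finset.Icc (-(r : ℤ) - 1) ((r : ℤ) + 1) := by
      intro x hx
      rw [Fintype.mem_piFinset]
      intro i
      rw [Finset.mem_Icc]
      have := hcon x hx i
      rw [abs_lt] at this
      constructor <;> omega
    have := Finset.card_le_card hsub
    omega
  obtain ⟨h₁, hh₁, i₀, hfar⟩ := hfar'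
  -- the radius R
  set R : ℤ := ((H.sites.sup CA4Aux.M : ℕ) : ℤ) + 2 with hRdef
  have hHball : ∀ h ∈ H.sites, ∀ i, |h i| ≤ R - 2 := by
    intro h hh i
    refine le_trans (CA4Aux.abs_le_M h i) ?_
    have : CA4Aux.M h ≤ H.sites.sup CA4Aux.M := Finset.le_sup hh
    rw [hRdef]
    push_cast
    omega
  have hrR : (r : ℤ) + 4 ≤ R := by
    have h1 := hHball h₁ hh₁ i₀
    omega
  have hR1 : 1 ≤ R := by
    rw [hRdef]
    have := Int.natCast_nonneg (H.sites.sup CA4Aux.M)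
    omega
  -- the escape direction
  set σ : ℤ := if 0 ≤ h₁ i₀ then 1 else -1 with hσdef
  have hσ : |σ| = 1 := by
    rw [hσdef]; split <;> simp
  have habs : ∀ k : ℕ, |h₁ i₀ + σ * k| = |h₁ i₀| + k := by
    intro k
    rw [hσdef]
    by_cases h : 0 ≤ h₁ i₀
    · rw [if_pos h, one_mul, abs_of_nonneg (by positivity), abs_of_nonneg h]
    · push_neg at h
      rw [if_neg (not_le.mpr h), abs_of_neg h]
      rw [abs_of_nonpos (by nlinarith [Int.natCast_nonneg k])]
      ring
  set K : ℕ := (R - |h₁ i₀|).toNat with hKdef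
  have hK : (K : ℤ) = R - |h₁ i₀| := by
    rw [hKdef]
    refine Int.toNat_of_nonneg ?_
    have := hHball h₁ hh₁ i₀
    omega
  set q : ℕ → Site d := fun k => Function.update h₁ i₀ (h₁ i₀ + σ * k) with hqdef
  have hqi₀ : ∀ k, q k i₀ = h₁ i₀ + σ * k := by
    intro k; rw [hqdef]; exact Function.update_self _ _ _
  have hqne : ∀ k, ∀ i, i ≠ i₀ → q k i = h₁ i := by
    intro k i hi; rw [hqdef]; exact Function.update_of_ne hi _ _
  have hq0 : q 0 = h₁ := by
    funext i
    by_cases h : i = i₀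
    · subst h; rw [hqi₀]; push_cast; ring
    · exact hqne 0 i h
  have hqsucc : ∀ k, q (k + 1) = Function.update (q k) i₀ (q k i₀ + σ) := by
    intro k
    funext i
    by_cases h : i = i₀
    · subst h
      rw [hqi₀, Function.update_self, hqi₀]
      push_cast; ring
    · rw [hqne _ i h, Function.update_of_ne h, hqne _ i h]
  have hqball : ∀ k, k ≤ K → ∀ i, |q k i| ≤ R := by
    intro k hk i
    by_cases h : i = i₀
    · subst h
      rw [hqi₀, habs k]
      have : (k : ℤ) ≤ K := by exact_mod_cast hk
      omega
    · rw [hqne _ i h]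
      have := hHball h₁ hh₁ i
      omega
  have hqfar : ∀ k, (r : ℤ) + 2 ≤ |q k i₀| := by
    intro k
    rw [hqi₀, habs k]
    have : (0 : ℤ) ≤ k := Int.natCast_nonneg k
    omega
  have hqshell : R ≤ |q K i₀| := by
    rw [hqi₀, habs K, hK]
    omega
  have hqbond : ∀ k, IsLatticeBond s(q k, q (k + 1)) := by
    intro k
    rw [hqsucc k]
    exact CA4Aux.isLatticeBond_update (q k) i₀ σ hσ
  -- the set D
  set ball0 : Finset (Site d) := Fintype.piFinset fun _ : Fin d => Finset.Icc (-R) R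
    with hball0
  have mem_ball0 : ∀ z : Site d, z ∈ ball0 ↔ ∀ i, |z i| ≤ R := by
    intro z
    rw [hball0, Fintype.mem_piFinset]
    constructor
    · intro h i; have := h i; rw [Finset.mem_Icc] at this; rw [abs_le]; exact ⟨this.1, this.2⟩
    · intro h i; rw [Finset.mem_Icc]; have := abs_le.mp (h i); exact ⟨this.1, this.2⟩
  set D : PreGraph d := ⟨ball0, (ball0 ×ˢ ball0).image fun p => s(p.1, p.2)⟩ with hDdef
  refine ⟨D, ?_⟩
  intro G hG y hy
  -- membership lemmas for the translated D
  have mem_ballS : ∀ z : Site d, z ∈ (translateCluster D y).sites ↔ ∀ i, |z i - y i| ≤ R := by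
    intro z
    show z ∈ ball0.image (· + y) ↔ _
    rw [Finset.mem_image]
    constructor
    · rintro ⟨a, ha, rfl⟩ i
      have := (mem_ball0 a).mp ha i
      simpa using this
    · intro h
      refine ⟨z - y, (mem_ball0 _).mpr fun i => by simpa using h i, by simp⟩
  have memD_intro : ∀ u v : Site d, (∀ i, |u i - y i| ≤ R) → (∀ i, |v i - y i| ≤ R) →
      s(u, v) ∈ (translateCluster D y).bonds := by
    intro u v hu hv
    show _ ∈ (((ball0 ×ˢ ball0).image fun p => s(p.1, p.2)).image (Sym2.map (· + y)))
    rw [Finset.mem_image]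
    refine ⟨s(u - y, v - y), ?_, by rw [Sym2.map_pair_eq]; simp⟩
    rw [Finset.mem_image]
    refine ⟨(u - y, v - y), ?_, rfl⟩
    rw [Finset.mem_product]
    exact ⟨(mem_ball0 _).mpr fun i => by simpa using hu i,
      (mem_ball0 _).mpr fun i => by simpa using hv i⟩
  have memD_elim : ∀ b ∈ (translateCluster D y).bonds, ∀ x ∈ b, ∀ i, |x i - y i| ≤ R := by
    intro b hb x hx i
    have hb' : b ∈ (((ball0 ×ˢ ball0).image fun p => s(p.1, p.2)).image (Sym2.map (· + y))) := hb
    rw [Finset.mem_image] at hb'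
    obtain ⟨b0, hb0, rfl⟩ := hb'
    rw [Finset.mem_image] at hb0
    obtain ⟨p, hp, rfl⟩ := hb0
    rw [Finset.mem_product] at hp
    rw [Sym2.map_pair_eq] at hx
    rcases Sym2.mem_iff.mp hx with rfl | rfl
    · have := (mem_ball0 _).mp hp.1 i; simpa using this
    · have := (mem_ball0 _).mp hp.2 i; simpa using this
  -- pieces of G'
  set shellS : Finset (Site d) :=
    (translateCluster D y).sites.filter (fun z => ∃ i, R ≤ |z i - y i|) with hshellSdef
  have mem_shellS : ∀ z : Site d, z ∈ shellS ↔ (∀ i, |z i - y i| ≤ R) ∧ ∃ i, R ≤ |z i - y i| := by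
    intro z
    rw [hshellSdef, Finset.mem_filter, mem_ballS]
  set HS : Finset (Site d) := H.sites.image (· + y) with hHSdef
  set pathS : Finset (Site d) := (Finset.range (K + 1)).image (fun k => q k + y) with hpathSdef
  set shellB : Finset (Sym2 (Site d)) :=
    (translateCluster D y).bonds.filter (fun b => IsLatticeBond b ∧ ∀ x ∈ b, x ∈ shellS)
    with hshellBdef
  set pathB : Finset (Sym2 (Site d)) :=
    (Finset.range K).image (fun k => s(q k + y, q (k + 1) + y)) with hpathBdef
  set HB : Finset (Sym2 (Site d)) := H.bonds.image (Sym2.map (· + y)) with hHBdef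
  set G' : PreGraph d :=
    ⟨(G.sites \ (translateCluster D y).sites) ∪ shellS ∪ pathS ∪ HS,
      (G.bonds \ (translateCluster D y).bonds) ∪ shellB ∪ pathB ∪ HB⟩ with hG'def
  have hG'sites : G'.sites
      = (G.sites \ (translateCluster D y).sites) ∪ shellS ∪ pathS ∪ HS := by rw [hG'def]
  have hG'bonds : G'.bonds
      = (G.bonds \ (translateCluster D y).bonds) ∪ shellB ∪ pathB ∪ HB := by rw [hG'def]
  have memD_intro' : ∀ b : Sym2 (Site d), (∀ x ∈ b, ∀ i, |x i - y i| ≤ R) →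
      b ∈ (translateCluster D y).bonds := by
    intro b
    induction b using Sym2.inductionOn with
    | _ u v =>
      intro h
      exact memD_intro u v (h u (Sym2.mem_iff.mpr (Or.inl rfl)))
        (h v (Sym2.mem_iff.mpr (Or.inr rfl)))
  have hshell_sub : shellS ⊆ (translateCluster D y).sites := Finset.filter_subset _ _
  have hpath_sub : pathS ⊆ (translateCluster D y).sites := by
    intro a ha
    rw [hpathSdef, Finset.mem_image] at ha
    obtain ⟨k, hk, rfl⟩ := ha
    rw [Finset.mem_range] at hk
    refine (mem_ballS _).mpr fun i => ?_
    have h2 : (q k + y) i - y i = q k i := by simp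
    rw [h2]
    exact hqball k (by omega) i
  have hHS_sub : HS ⊆ (translateCluster D y).sites := by
    intro a ha
    rw [hHSdef, Finset.mem_image] at ha
    obtain ⟨h, hh, rfl⟩ := ha
    refine (mem_ballS _).mpr fun i => ?_
    have h2 : (h + y) i - y i = h i := by simp
    rw [h2]
    have := hHball h hh i
    omega
  have hshellB_sub : shellB ⊆ (translateCluster D y).bonds := Finset.filter_subset _ _
  have hpathB_sub : pathB ⊆ (translateCluster D y).bonds := by
    intro b hb
    rw [hpathBdef, Finset.mem_image] at hb
    obtain ⟨k, hk, rfl⟩ := hb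
    rw [Finset.mem_range] at hk
    refine memD_intro _ _ (fun i => ?_) (fun i => ?_)
    · have h2 : (q k + y) i - y i = q k i := by simp
      rw [h2]; exact hqball k (by omega) i
    · have h2 : (q (k+1) + y) i - y i = q (k+1) i := by simp
      rw [h2]; exact hqball (k+1) (by omega) i
  have hHB_sub : HB ⊆ (translateCluster D y).bonds := by
    intro b hb
    rw [hHBdef, Finset.mem_image] at hb
    obtain ⟨b0, hb0, rfl⟩ := hb
    refine memD_intro' _ ?_
    intro x hx i
    rw [Sym2.mem_map] at hx
    obtain ⟨a, ha, rfl⟩ := hx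
    have ha' : a ∈ H.sites := hHanim.2.2.1 b0 hb0 a ha
    have h2 : (a + y) i - y i = a i := by simp
    rw [h2]
    have := hHball a ha' i
    omega
  have hshift : ∀ (z : Site d) (i : Fin d), (z + y) i - y i = z i := fun z i => by simp
  refine ⟨G', y, ?_, ?_, ?_, ?_, ?_⟩
  · -- IsBondAnimal G'
    have hcmem : ((fun _ => R) + y) ∈ shellS := by
      refine (mem_shellS _).mpr ⟨fun i => ?_, ⟨⟨0, by omega⟩, ?_⟩⟩
      · rw [hshift, abs_of_nonneg (by omega)]
      · rw [hshift]
        exact le_abs_self R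
    have hcmem' : ((fun _ => R) + y) ∈ G'.sites := by
      rw [hG'sites]
      simp only [Finset.mem_union]
      exact Or.inl (Or.inl (Or.inr hcmem))
    refine ⟨⟨_, hcmem'⟩, ?_, ?_, ?_⟩
    · -- lattice bonds
      intro b hb
      rw [hG'bonds] at hb
      simp only [Finset.mem_union] at hb
      rcases hb with ((h1 | h2) | h3) | h4
      · exact hG.2.1 b (Finset.mem_sdiff.mp h1).1
      · exact (Finset.mem_filter.mp h2).2.1
      · obtain ⟨k, hk, rfl⟩ := Finset.mem_image.mp h3
        have := CA4Aux.isLatticeBond_translate y (hqbond k)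
        rwa [Sym2.map_pair_eq] at this
      · obtain ⟨b0, hb0, rfl⟩ := Finset.mem_image.mp h4
        exact CA4Aux.isLatticeBond_translate y (hHanim.2.1 b0 hb0)
    · -- endpoints of bonds are sites
      intro b hb x hx
      rw [hG'bonds] at hb
      simp only [Finset.mem_union] at hb
      rw [hG'sites]
      simp only [Finset.mem_union]
      rcases hb with ((h1 | h2) | h3) | h4
      · obtain ⟨hbG, hbD⟩ := Finset.mem_sdiff.mp h1
        have hxG : x ∈ G.sites := hG.2.2.1 b hbG x hx
        have hlat := hG.2.1 b hbG
        obtain ⟨w, hrep⟩ : ∃ w, b = s(x, w) := by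
          obtain ⟨u, v, rfl, _⟩ := hlat
          rcases Sym2.mem_iff.mp hx with rfl | rfl
          · exact ⟨v, rfl⟩
          · exact ⟨u, Sym2.eq_swap⟩
        have hsum := CA4Aux.lattice_sum hlat hrep
        by_cases hxin : x ∈ (translateCluster D y).sites
        · refine Or.inl (Or.inl (Or.inr ((mem_shellS x).mpr ⟨(mem_ballS x).mp hxin, ?_⟩)))
          by_contra hno
          push_neg at hno
          refine hbD ?_
          rw [hrep]
          refine memD_intro x w ((mem_ballS x).mp hxin) fun i => ?_
          have h1 := CA4Aux.abs_sub_le_one hsum i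
          have h2 := hno i
          have h3 : |w i - y i| ≤ |x i - y i| + |x i - w i| := by
            rw [show w i - y i = (x i - y i) - (x i - w i) by ring]
            exact abs_sub _ _
          linarith
        · exact Or.inl (Or.inl (Or.inl (Finset.mem_sdiff.mpr ⟨hxG, hxin⟩)))
      · exact Or.inl (Or.inl (Or.inr ((Finset.mem_filter.mp h2).2.2 x hx)))
      · obtain ⟨k, hk, rfl⟩ := Finset.mem_image.mp h3
        rw [Finset.mem_range] at hk
        rcases Sym2.mem_iff.mp hx with rfl | rfl
        · exact Or.inl (Or.inr (Finset.mem_image.mpr ⟨k, Finset.mem_range.mpr (by omega), rfl⟩))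
        · exact Or.inl (Or.inr (Finset.mem_image.mpr ⟨k + 1, Finset.mem_range.mpr (by omega), rfl⟩))
      · obtain ⟨b0, hb0, rfl⟩ := Finset.mem_image.mp h4
        obtain ⟨a, ha, rfl⟩ := Sym2.mem_map.mp hx
        exact Or.inr (Finset.mem_image.mpr ⟨a, hHanim.2.2.1 b0 hb0 a ha, rfl⟩)
    · -- connectivity
      have hAdjsymm : Symmetric (Adj G') := by
        intro u v h
        rw [Adj, Sym2.eq_swap]
        exact h
      have reach_shell : ∀ w ∈ shellS,
          Relation.ReflTransGen (Adj G') w ((fun _ => R) + y) := by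
        intro w hw
        obtain ⟨hwball, hwsh⟩ := (mem_shellS w).mp hw
        have hrel : ∀ u v : Site d, (∑ i, |u i - v i|) = 1 →
            (∀ i, |u i| ≤ R) → (∀ i, |v i| ≤ R) →
            (∃ i, R ≤ |u i|) → (∃ i, R ≤ |v i|) → Adj G' (u + y) (v + y) := by
          intro u v hsum hbu hbv hsu hsv
          show s(u + y, v + y) ∈ G'.bonds
          rw [hG'bonds]
          simp only [Finset.mem_union]
          refine Or.inl (Or.inl (Or.inr (Finset.mem_filter.mpr ⟨?_, ?_, ?_⟩)))
          · exact memD_intro _ _ (fun i => by rw [hshift]; exact hbu i)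
              (fun i => by rw [hshift]; exact hbv i)
          · refine ⟨u + y, v + y, rfl, ?_⟩
            rw [← hsum]
            exact Finset.sum_congr rfl fun i _ => by simp
          · intro x hx
            rcases Sym2.mem_iff.mp hx with rfl | rfl
            · refine (mem_shellS _).mpr ⟨fun i => by rw [hshift]; exact hbu i, ?_⟩
              obtain ⟨i, hi⟩ := hsu
              exact ⟨i, by rw [hshift]; exact hi⟩
            · refine (mem_shellS _).mpr ⟨fun i => by rw [hshift]; exact hbv i, ?_⟩
              obtain ⟨i, hi⟩ := hsv
              exact ⟨i, by rw [hshift]; exact hi⟩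
        have main := CA4Aux.shell_reach hd R hR1 _ hrel (w - y)
          (fun i => by simpa using hwball i)
          (by obtain ⟨i, hi⟩ := hwsh; exact ⟨i, by simpa using hi⟩)
        have hlift : Relation.ReflTransGen (Adj G') ((fun (a : Site d) => a + y) (w - y)) ((fun (a : Site d) => a + y) (fun _ => R)) :=
          Relation.ReflTransGen.lift (fun a => a + y) (fun a b h => h) _ _ main
        have hwy : (fun (a : Site d) => a + y) (w - y) = w := by simp
        rwa [hwy] at hlift
      have reach_path : ∀ m k, k + m = K →
          Relation.ReflTransGen (Adj G') (q k + y) ((fun _ => R) + y) := by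
        intro m
        induction m with
        | zero =>
          intro k hk
          have hk' : k = K := by omega
          subst hk'
          exact reach_shell _ ((mem_shellS _).mpr
            ⟨fun i => by rw [hshift]; exact hqball K le_rfl i,
             ⟨i₀, by rw [hshift]; exact hqshell⟩⟩)
        | succ m IH =>
          intro k hk
          have hadj : Adj G' (q k + y) (q (k + 1) + y) := by
            show _ ∈ G'.bonds
            rw [hG'bonds]
            simp only [Finset.mem_union]
            exact Or.inl (Or.inr (Finset.mem_image.mpr
              ⟨k, Finset.mem_range.mpr (by omega), rfl⟩))
          exact Relation.ReflTransGen.head hadj (IH (k + 1) (by omega))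
      have reach_H : ∀ h ∈ H.sites,
          Relation.ReflTransGen (Adj G') (h + y) ((fun _ => R) + y) := by
        intro h hh
        have hchain := hHanim.2.2.2 h hh h₁ hh₁
        have hmap : ∀ a b : Site d, Adj H a b → Adj G' (a + y) (b + y) := by
          intro a b hab
          show _ ∈ G'.bonds
          rw [hG'bonds]
          simp only [Finset.mem_union]
          exact Or.inr (Finset.mem_image.mpr ⟨s(a, b), hab, Sym2.map_pair_eq _ _ _⟩)
        have h0 : q 0 + y = h₁ + y := by rw [hq0]
        exact (show Relation.ReflTransGen (Adj G') (h + y) (h₁ + y) from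
          Relation.ReflTransGen.lift (fun a => a + y) hmap _ _ hchain).trans
          (h0 ▸ reach_path K 0 (by omega))
      have reach_out : ∀ a : Site d, Relation.ReflTransGen (Adj G) a y →
          a ∉ (translateCluster D y).sites →
          Relation.ReflTransGen (Adj G') a ((fun _ => R) + y) := by
        intro a hchain
        induction hchain using Relation.ReflTransGen.head_induction_on with
        | refl =>
          intro hmem
          exact absurd ((mem_ballS y).mpr fun i => by simp only [sub_self, abs_zero]; omega) hmem
        | @head u v hadj htail IH =>
          intro hmem
          have hbG : s(u, v) ∈ G.bonds := hadj
          have hbD : s(u, v) ∉ (translateCluster D y).bonds := by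
            intro hmem2
            exact hmem ((mem_ballS u).mpr fun i =>
              memD_elim _ hmem2 u (Sym2.mem_iff.mpr (Or.inl rfl)) i)
          have hadj' : Adj G' u v := by
            show _ ∈ G'.bonds
            rw [hG'bonds]
            simp only [Finset.mem_union]
            exact Or.inl (Or.inl (Or.inl (Finset.mem_sdiff.mpr ⟨hbG, hbD⟩)))
          by_cases hv : v ∈ (translateCluster D y).sites
          · have hsum := CA4Aux.lattice_sum (hG.2.1 _ hbG) rfl
            obtain ⟨i1, hi1⟩ : ∃ i, R + 1 ≤ |u i - y i| := by
              by_contra hno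
              push_neg at hno
              exact hmem ((mem_ballS u).mpr fun i => by have := hno i; omega)
            have hv_shell : v ∈ shellS := by
              refine (mem_shellS v).mpr ⟨(mem_ballS v).mp hv, ⟨i1, ?_⟩⟩
              have h1 := CA4Aux.abs_sub_le_one hsum i1
              have h2 : |u i1 - y i1| ≤ |v i1 - y i1| + |u i1 - v i1| := by
                rw [show u i1 - y i1 = (v i1 - y i1) + (u i1 - v i1) by ring]
                exact abs_add_le _ _
              linarith
            exact Relation.ReflTransGen.head hadj' (reach_shell v hv_shell)
          · exact Relation.ReflTransGen.head hadj' (IH hv)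
      have reach_all : ∀ a ∈ G'.sites,
          Relation.ReflTransGen (Adj G') a ((fun _ => R) + y) := by
        intro a ha
        rw [hG'sites] at ha
        simp only [Finset.mem_union] at ha
        rcases ha with ((h1 | h2) | h3) | h4
        · obtain ⟨haG, haD⟩ := Finset.mem_sdiff.mp h1
          exact reach_out a (hG.2.2.2 a haG y hy) haD
        · exact reach_shell a h2
        · obtain ⟨k, hk, rfl⟩ := Finset.mem_image.mp h3
          rw [Finset.mem_range] at hk
          exact reach_path (K - k) k (by omega)
        · obtain ⟨h, hh, rfl⟩ := Finset.mem_image.mp h4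
          exact reach_H h hh
      intro a ha b hb
      exact (reach_all a ha).trans
        (by haveI : Std.Symm (Adj G') := ⟨hAdjsymm⟩; exact Std.Symm.symm _ _ (reach_all b hb))
  · -- y ∈ (translateCluster D y).sites
    refine (mem_ballS y).mpr fun i => ?_
    simp only [sub_self, abs_zero]
    omega
  · -- pattern containment
    refine ⟨?_, ?_, ?_, ?_⟩
    · intro a ha
      obtain ⟨p, hp, rfl⟩ := Finset.mem_image.mp ha
      rw [hG'sites]
      simp only [Finset.mem_union]
      exact Or.inr (Finset.mem_image.mpr ⟨p, hHP.1 hp, rfl⟩)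
    · intro b hb
      obtain ⟨b0, hb0, rfl⟩ := Finset.mem_image.mp hb
      rw [hG'bonds]
      simp only [Finset.mem_union]
      exact Or.inr (Finset.mem_image.mpr ⟨b0, hHP.2.1 hb0, rfl⟩)
    · intro a ha hmem
      obtain ⟨p, hp, rfl⟩ := Finset.mem_image.mp ha
      have hpr : ∀ i, |p i| ≤ (r : ℤ) := hrsite p (Finset.mem_union_right _ hp)
      have hpin : p + y ∈ (translateCluster D y).sites := by
        refine (mem_ballS _).mpr fun i => ?_
        have h2 : (p + y) i - y i = p i := by simp
        rw [h2]
        have := hpr i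
        omega
      rw [hG'sites] at hmem
      simp only [Finset.mem_union] at hmem
      rcases hmem with ((h1 | h2) | h3) | h4
      · exact (Finset.mem_sdiff.mp h1).2 hpin
      · obtain ⟨hin, i, hi⟩ := (mem_shellS _).mp h2
        have h2' : (p + y) i - y i = p i := by simp
        rw [h2'] at hi
        have := hpr i
        linarith
      · obtain ⟨k, hk, heq⟩ := Finset.mem_image.mp h3
        have hpq : q k = p := by
          have := add_left_injective y heq
          simpa using this
        have h1 := hqfar k
        have h2 := hpr i₀
        rw [hpq] at h1
        linarith
      · obtain ⟨h, hh, heq⟩ := Finset.mem_image.mp h4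
        have hhp : h = p := by
          have := add_left_injective y heq
          simpa using this
        exact hHP.2.2.1 p hp (hhp ▸ hh)
    · intro b hb hmem
      obtain ⟨b0, hb0, rfl⟩ := Finset.mem_image.mp hb
      have hbr : ∀ x ∈ b0, ∀ i, |x i| ≤ (r : ℤ) :=
        fun x hx => hrbond b0 (Finset.mem_union_right _ hb0) x hx
      obtain ⟨u, hu⟩ : ∃ u, u ∈ b0 :=
        Sym2.inductionOn b0 fun u v => ⟨u, Sym2.mem_iff.mpr (Or.inl rfl)⟩
      have huy : u + y ∈ Sym2.map (· + y) b0 := Sym2.mem_map.mpr ⟨u, hu, rfl⟩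
      rw [hG'bonds] at hmem
      simp only [Finset.mem_union] at hmem
      rcases hmem with ((h1 | h2) | h3) | h4
      · refine (Finset.mem_sdiff.mp h1).2 (memD_intro' _ ?_)
        intro x hx i
        rw [Sym2.mem_map] at hx
        obtain ⟨a, ha, rfl⟩ := hx
        have h2 : (a + y) i - y i = a i := by simp
        rw [h2]
        have := hbr a ha i
        omega
      · have hx := ((Finset.mem_filter.mp h2).2.2) _ huy
        obtain ⟨hin, i, hi⟩ := (mem_shellS _).mp hx
        have h2' : (u + y) i - y i = u i := by simp
        rw [h2'] at hi
        have := hbr u hu i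
        linarith
      · obtain ⟨k, hk, heq⟩ := Finset.mem_image.mp h3
        rw [← heq] at huy
        rcases Sym2.mem_iff.mp huy with h | h
        · have hqu : q k = u := by
            have := add_left_injective y h.symm
            simpa using this
          have h1 := hqfar k
          have h2 := hbr u hu i₀
          rw [hqu] at h1
          linarith
        · have hqu : q (k + 1) = u := by
            have := add_left_injective y h.symm
            simpa using this
          have h1 := hqfar (k + 1)
          have h2 := hbr u hu i₀
          rw [hqu] at h1
          linarith
      · obtain ⟨b1, hb1, heq⟩ := Finset.mem_image.mp h4
        have : b1 = b0 := Sym2.map.injective (add_left_injective y) heq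
        exact hHP.2.2.2 b0 hb0 (this ▸ hb1)
  · -- sites outside agree
    apply Finset.Subset.antisymm
    · intro a ha
      rw [Finset.mem_sdiff] at ha ⊢
      obtain ⟨haG', haD⟩ := ha
      refine ⟨?_, haD⟩
      rw [hG'sites] at haG'
      simp only [Finset.mem_union] at haG'
      rcases haG' with ((h1 | h2) | h3) | h4
      · exact (Finset.mem_sdiff.mp h1).1
      · exact absurd (hshell_sub h2) haD
      · exact absurd (hpath_sub h3) haD
      · exact absurd (hHS_sub h4) haD
    · intro a ha
      rw [Finset.mem_sdiff] at ha ⊢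
      refine ⟨?_, ha.2⟩
      rw [hG'sites]
      simp only [Finset.mem_union]
      exact Or.inl (Or.inl (Or.inl (Finset.mem_sdiff.mpr ha)))
  · -- bonds outside agree
    apply Finset.Subset.antisymm
    · intro b hb
      rw [Finset.mem_sdiff] at hb ⊢
      obtain ⟨hbG', hbD⟩ := hb
      refine ⟨?_, hbD⟩
      rw [hG'bonds] at hbG'
      simp only [Finset.mem_union] at hbG'
      rcases hbG' with ((h1 | h2) | h3) | h4
      · exact (Finset.mem_sdiff.mp h1).1
      · exact absurd (hshellB_sub h2) hbD
      · exact absurd (hpathB_sub h3) hbD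
      · exact absurd (hHB_sub h4) hbD
    · intro b hb
      rw [Finset.mem_sdiff] at hb ⊢
      refine ⟨?_, hb.2⟩
      rw [hG'bonds]
      simp only [Finset.mem_union]
      exact Or.inl (Or.inl (Or.inl (Finset.mem_sdiff.mpr hb)))
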